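/- For a bipartite pure state |Ψ⟩ ∈ H_S ⊗ H_A and a rank-one projective measurement {Π_a = |φ_a⟩⟨φ_a|} on the ancilla (with {|φ_a⟩} an orthonormal basis of H_A), the daemonic ergotropy equals the energy of the reduced state: Σ_a p_a E(ρ_a^S) = Tr[H ρ^S], where ρ^S = Tr_A |Ψ⟩⟨Ψ|. -/

import Mathlib

open Matrix
open scoped ComplexOrder

/-- Energy of a state `ρ` with respect to Hamiltonian `H`: `Tr[Hρ]` (real part). -/
noncomputable def energy {d : ℕ} (H ρ : Matrix (Fin d) (Fin d) ℂ) : ℝ :=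
  (Matrix.trace (H * ρ)).re

/-- Minimal energy achievable from `ρ` by unitaries (passive-state energy). -/
noncomputable def passiveEnergy {d : ℕ} (H ρ : Matrix (Fin d) (Fin d) ℂ) : ℝ :=
  sInf {x : ℝ | ∃ U ∈ Matrix.unitaryGroup (Fin d) ℂ, x = energy H (U * ρ * Uᴴ)}

/-- Ergotropy: maximal work extractable by unitaries. -/
noncomputable def ergotropy {d : ℕ} (H ρ : Matrix (Fin d) (Fin d) ℂ) : ℝ :=
  energy H ρ - passiveEnergy H ρ

open Kronecker

/-- Partial trace over the ancilla (second factor). -/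
noncomputable def ptraceA {dS dA : ℕ} (M : Matrix (Fin dS × Fin dA) (Fin dS × Fin dA) ℂ) :
    Matrix (Fin dS) (Fin dS) ℂ :=
  Matrix.of fun i j => ∑ k : Fin dA, M (i, k) (j, k)

/-- Probability of outcome associated to the POVM element `P` on the ancilla. -/
noncomputable def outProb {dS dA : ℕ} (ρSA : Matrix (Fin dS × Fin dA) (Fin dS × Fin dA) ℂ)
    (P : Matrix (Fin dA) (Fin dA) ℂ) : ℝ :=
  (Matrix.trace (ρSA * ((1 : Matrix (Fin dS) (Fin dS) ℂ) ⊗ₖ P))).re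

/-- Conditional (normalized) state of the system given the POVM element `P`. -/
noncomputable def condState {dS dA : ℕ} (ρSA : Matrix (Fin dS × Fin dA) (Fin dS × Fin dA) ℂ)
    (P : Matrix (Fin dA) (Fin dA) ℂ) : Matrix (Fin dS) (Fin dS) ℂ :=
  (outProb ρSA P)⁻¹ • ptraceA (ρSA * ((1 : Matrix (Fin dS) (Fin dS) ℂ) ⊗ₖ P))

lemma trace_mul_vecMulVec {d : ℕ} (A : Matrix (Fin d) (Fin d) ℂ) (u : Fin d → ℂ) :
    Matrix.trace (A * Matrix.vecMulVec u (star u)) = star u ⬝ᵥ A.mulVec u := by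
  simp only [Matrix.trace, Matrix.diag, Matrix.mul_apply, Matrix.vecMulVec_apply,
    dotProduct, Matrix.mulVec, Pi.star_apply]
  congr 1; ext i
  rw [Finset.mul_sum]
  congr 1; ext j
  ring

lemma unitary_conj_vecMulVec {d : ℕ} (U : Matrix (Fin d) (Fin d) ℂ) (u : Fin d → ℂ) :
    U * Matrix.vecMulVec u (star u) * Uᴴ =
      Matrix.vecMulVec (U.mulVec u) (star (U.mulVec u)) := by
  ext i j
  simp only [Matrix.mul_apply, Matrix.vecMulVec_apply, Matrix.conjTranspose_apply,
    Matrix.mulVec, dotProduct, Pi.star_apply, star_sum, star_mul']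
  simp only [Finset.sum_mul, Finset.mul_sum]
  exact Finset.sum_congr rfl fun k _ => Finset.sum_congr rfl fun l _ => by ring

lemma rows_orthonormal_completeness {d : ℕ} (c : Fin d → EuclideanSpace ℂ (Fin d))
    (hc : Orthonormal ℂ c) (i j : Fin d) :
    ∑ k, c k i * star (c k j) = if i = j then (1:ℂ) else 0 := by
  classical
  have hco := orthonormal_iff_ite.mp hc
  set Cm : Matrix (Fin d) (Fin d) ℂ := Matrix.of (fun k i => c k i) with hCm
  have h1 : Cm * Cmᴴ = 1 := by
    ext k m
    simp only [Matrix.mul_apply, Matrix.conjTranspose_apply, Matrix.one_apply, hCm,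
      Matrix.of_apply]
    have := hco m k
    simp only [PiLp.inner_apply, RCLike.inner_apply, starRingEnd_apply] at this
    rw [this]
    simp [eq_comm]
  have h2 : Cmᴴ * Cm = 1 := mul_eq_one_comm.mp h1
  have h3 := congrFun (congrFun h2 i) j
  simp only [Matrix.mul_apply, Matrix.conjTranspose_apply, Matrix.one_apply, hCm,
    Matrix.of_apply] at h3
  have h4 := congrArg star h3
  simp only [star_sum, star_mul', star_star] at h4
  rw [h4]
  simp [apply_ite]

lemma exists_unitary_mapsTo {d : ℕ} (w t : Fin d → ℂ)
    (hw : ∑ i, Complex.normSq (w i) = 1) (ht : ∑ i, Complex.normSq (t i) = 1) :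
    ∃ U ∈ Matrix.unitaryGroup (Fin d) ℂ, U.mulVec w = t := by
  classical
  have hd : 0 < d := by
    by_contra h
    push_neg at h
    interval_cases d
    simp at hw
  set z : Fin d := ⟨0, hd⟩
  -- normalized vectors in EuclideanSpace
  set ws : EuclideanSpace ℂ (Fin d) := (WithLp.equiv 2 _).symm (star w) with hws
  set ts : EuclideanSpace ℂ (Fin d) := (WithLp.equiv 2 _).symm t with hts
  have hwsa : ∀ j, ws j = star (w j) := fun j => rfl
  have htsa : ∀ j, ts j = t j := fun j => rfl
  have hwnorm : ‖ws‖ = 1 := by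
    rw [EuclideanSpace.norm_eq]
    have : ∀ j, ‖ws j‖ ^ 2 = Complex.normSq (w j) := by
      intro j
      rw [hwsa, norm_star, Complex.sq_norm]
    simp only [this, hw, Real.sqrt_one]
  have htnorm : ‖ts‖ = 1 := by
    rw [EuclideanSpace.norm_eq]
    have : ∀ j, ‖ts j‖ ^ 2 = Complex.normSq (t j) := by
      intro j
      rw [htsa, Complex.sq_norm]
    simp only [this, ht, Real.sqrt_one]
  have hcard : Module.finrank ℂ (EuclideanSpace ℂ (Fin d)) = Fintype.card (Fin d) := by simp
  have hbo : Orthonormal ℂ (Set.restrict {z} (fun _ : Fin d => ws)) := by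
    constructor
    · intro i; exact hwnorm
    · intro i j hij
      exact absurd (Subtype.ext ((Set.mem_singleton_iff.mp i.2).trans
        (Set.mem_singleton_iff.mp j.2).symm)) hij
  have hco : Orthonormal ℂ (Set.restrict {z} (fun _ : Fin d => ts)) := by
    constructor
    · intro i; exact htnorm
    · intro i j hij
      exact absurd (Subtype.ext ((Set.mem_singleton_iff.mp i.2).trans
        (Set.mem_singleton_iff.mp j.2).symm)) hij
  obtain ⟨b, hbz⟩ := hbo.exists_orthonormalBasis_extension_of_card_eq hcard
  obtain ⟨c, hcz⟩ := hco.exists_orthonormalBasis_extension_of_card_eq hcard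
  have hbz' : b z = ws := hbz z rfl
  have hcz' : c z = ts := hcz z rfl
  -- matrices
  set Bm : Matrix (Fin d) (Fin d) ℂ := Matrix.of (fun k j => b k j) with hBm
  set Cm : Matrix (Fin d) (Fin d) ℂ := Matrix.of (fun k j => c k j) with hCmm
  set U : Matrix (Fin d) (Fin d) ℂ := Cmᵀ * Bm with hU
  have hBB : Bm * Bmᴴ = 1 := by
    ext k m
    have := orthonormal_iff_ite.mp b.orthonormal m k
    simp only [PiLp.inner_apply, RCLike.inner_apply, starRingEnd_apply] at this
    simp only [Matrix.mul_apply, Matrix.conjTranspose_apply, Matrix.one_apply, hBm,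
      Matrix.of_apply]
    rw [this]
    simp [eq_comm]
  have hCC : Cm * Cmᴴ = 1 := by
    ext k m
    have := orthonormal_iff_ite.mp c.orthonormal m k
    simp only [PiLp.inner_apply, RCLike.inner_apply, starRingEnd_apply] at this
    simp only [Matrix.mul_apply, Matrix.conjTranspose_apply, Matrix.one_apply, hCmm,
      Matrix.of_apply]
    rw [this]
    simp [eq_comm]
  have hUU : U * star U = 1 := by
    rw [Matrix.star_eq_conjTranspose, hU, Matrix.conjTranspose_mul, Matrix.mul_assoc,
      ← Matrix.mul_assoc Bm, hBB, Matrix.one_mul]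
    ext i j
    simp only [Matrix.mul_apply, Matrix.transpose_apply, Matrix.conjTranspose_apply,
      Matrix.of_apply, hCmm]
    rw [rows_orthonormal_completeness c c.orthonormal i j]
    simp [Matrix.one_apply]
  have hkz : ∀ k, ∑ j, b k j * w j = if k = z then 1 else 0 := by
    intro k
    have h := orthonormal_iff_ite.mp b.orthonormal k z
    rw [hbz'] at h
    simp only [PiLp.inner_apply, RCLike.inner_apply, starRingEnd_apply, hwsa] at h
    have h2 := congrArg star h
    simp only [star_sum, star_mul', star_star] at h2
    rw [show (∑ j, b k j * w j) = ∑ j, w j * b k j from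
      Finset.sum_congr rfl fun j _ => mul_comm _ _, h2]
    simp [apply_ite]
  have hmul : U.mulVec w = t := by
    funext i
    have e1 : U.mulVec w i = ∑ j, (∑ k, c k i * b k j) * w j := by
      simp [Matrix.mulVec, dotProduct, hU, Matrix.mul_apply, hBm, hCmm,
        Matrix.transpose_apply]
    rw [e1]
    have e2 : (∑ j, (∑ k, c k i * b k j) * w j) = ∑ k, c k i * ∑ j, b k j * w j := by
      simp only [Finset.sum_mul, Finset.mul_sum]
      rw [Finset.sum_comm]
      exact Finset.sum_congr rfl fun k _ => Finset.sum_congr rfl fun j _ => by ring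
    rw [e2]
    simp only [hkz, mul_ite, mul_one, mul_zero, Finset.sum_ite_eq', Finset.mem_univ, if_true]
    rw [hcz']
    exact htsa i
  exact ⟨U, Matrix.mem_unitaryGroup_iff.mpr hUU, hmul⟩


/-- The set of reachable energies is nonempty and bounded below by 0;
for a pure normalized state we can reach energy 0 using the kernel vector. -/
lemma passiveEnergy_pure_eq_zero {d : ℕ} (H : Matrix (Fin d) (Fin d) ℂ) (hH : H.PosSemidef)
    (v : Fin d → ℂ) (hv : v ≠ 0) (hker : H.mulVec v = 0)
    (u : Fin d → ℂ) (hu : ∑ i, Complex.normSq (u i) = 1) :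
    passiveEnergy H (Matrix.vecMulVec u (star u)) = 0 := by
  classical
  set ρ := Matrix.vecMulVec u (star u) with hρ
  -- normalize v
  have hvpos : 0 < ∑ i, Complex.normSq (v i) := by
    obtain ⟨i, hi⟩ := Function.ne_iff.mp hv
    refine Finset.sum_pos' (fun j _ => Complex.normSq_nonneg _) ⟨i, Finset.mem_univ i, ?_⟩
    simpa [Complex.normSq_pos] using hi
  set n : ℝ := Real.sqrt (∑ i, Complex.normSq (v i)) with hn
  have hnpos : 0 < n := Real.sqrt_pos.mpr hvpos
  set vhat : Fin d → ℂ := fun i => (n⁻¹ : ℂ) * v i with hvhat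
  have hvhat1 : ∑ i, Complex.normSq (vhat i) = 1 := by
    have : ∀ i, Complex.normSq (vhat i) = (n⁻¹) ^ 2 * Complex.normSq (v i) := by
      intro i
      simp [hvhat, Complex.normSq_mul, Complex.normSq_ofReal, sq]
    rw [Finset.sum_congr rfl fun i _ => this i, ← Finset.mul_sum]
    have hnsq : n ^ 2 = ∑ i, Complex.normSq (v i) := Real.sq_sqrt hvpos.le
    field_simp [hnsq]
    exact hnsq.symm
  have hkerhat : H.mulVec vhat = 0 := by
    have : vhat = (n⁻¹ : ℂ) • v := by funext i; simp [hvhat]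
    rw [this, Matrix.mulVec_smul, hker, smul_zero]
  -- the set
  set S : Set ℝ := {x : ℝ | ∃ U ∈ Matrix.unitaryGroup (Fin d) ℂ, x = energy H (U * ρ * Uᴴ)}
    with hS
  have hlb : ∀ x ∈ S, (0:ℝ) ≤ x := by
    rintro x ⟨U, hU, rfl⟩
    rw [energy, unitary_conj_vecMulVec, trace_mul_vecMulVec]
    have := hH.dotProduct_mulVec_nonneg (U.mulVec u)
    rw [Complex.le_def] at this
    simpa using this.1
  have hmem0 : (0:ℝ) ∈ S := by
    obtain ⟨U, hU, hUmap⟩ := exists_unitary_mapsTo u vhat hu hvhat1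
    refine ⟨U, hU, ?_⟩
    rw [energy, unitary_conj_vecMulVec, trace_mul_vecMulVec, hUmap, hkerhat]
    simp
  exact le_antisymm (csInf_le ⟨0, hlb⟩ hmem0) (le_csInf ⟨0, hmem0⟩ hlb)

/-- for a bipartite pure state and a rank-one projective measurement
on the ancilla, the daemonic ergotropy equals the energy of the reduced state. -/
theorem daemonic_ergotropy_pure_rankone {dS dA : ℕ}
    (H : Matrix (Fin dS) (Fin dS) ℂ) (hH : H.PosSemidef)
    (v : Fin dS → ℂ) (hv : v ≠ 0) (hker : H.mulVec v = 0)
    (Ψ : Fin dS × Fin dA → ℂ) (hΨ : ∑ i, Complex.normSq (Ψ i) = 1)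
    (φ : Fin dA → Fin dA → ℂ)
    (hortho : ∀ a b, ∑ k, star (φ a k) * φ b k = if a = b then 1 else 0) :
    ∑ a, outProb (Matrix.vecMulVec Ψ (star Ψ)) (Matrix.vecMulVec (φ a) (star (φ a))) *
        ergotropy H (condState (Matrix.vecMulVec Ψ (star Ψ))
          (Matrix.vecMulVec (φ a) (star (φ a)))) =
      energy H (ptraceA (Matrix.vecMulVec Ψ (star Ψ))) := by
  classical
  set ρSA := Matrix.vecMulVec Ψ (star Ψ) with hρSA
  set ξ : Fin dA → Fin dS → ℂ := fun a i => ∑ k, Ψ (i, k) * star (φ a k) with hξ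
  -- Lemma A : partial trace of measured state is an outer product
  have hA : ∀ a, ptraceA (ρSA * ((1 : Matrix (Fin dS) (Fin dS) ℂ) ⊗ₖ
      Matrix.vecMulVec (φ a) (star (φ a)))) = Matrix.vecMulVec (ξ a) (star (ξ a)) := by
    intro a
    ext i j
    simp only [ptraceA, Matrix.of_apply, Matrix.mul_apply, Fintype.sum_prod_type,
      Matrix.kroneckerMap_apply, Matrix.vecMulVec_apply, Matrix.one_apply, Pi.star_apply,
      hρSA, hξ, ite_mul, one_mul, zero_mul, mul_ite, mul_zero, Finset.sum_ite_eq',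
      Finset.mem_univ, if_true, star_sum, star_mul', star_star]
    rw [Finset.sum_mul]
    refine Finset.sum_congr rfl fun k _ => ?_
    rw [Finset.sum_comm]
    simp only [Finset.sum_ite_eq', Finset.mem_univ, if_true, Finset.mul_sum]
    exact Finset.sum_congr rfl fun m _ => by ring
  -- probability formula
  have htrace_ptrace : ∀ (M : Matrix (Fin dS × Fin dA) (Fin dS × Fin dA) ℂ),
      Matrix.trace M = Matrix.trace (ptraceA M) := by
    intro M
    simp [Matrix.trace, Matrix.diag, ptraceA, Fintype.sum_prod_type]
  have hP : ∀ a, outProb ρSA (Matrix.vecMulVec (φ a) (star (φ a))) =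
      ∑ i, Complex.normSq (ξ a i) := by
    intro a
    rw [outProb, htrace_ptrace, hA]
    simp only [Matrix.trace, Matrix.diag, Matrix.vecMulVec_apply, Pi.star_apply]
    rw [show (∑ i, ξ a i * star (ξ a i)) = ((∑ i, Complex.normSq (ξ a i) : ℝ) : ℂ) by
      push_cast
      exact Finset.sum_congr rfl fun i _ => (Complex.mul_conj (ξ a i))]
    simp
  -- completeness of the measurement basis
  have hcompl : ∀ k m, ∑ a, star (φ a k) * φ a m = if k = m then (1:ℂ) else 0 := by
    set Φm : Matrix (Fin dA) (Fin dA) ℂ := Matrix.of (fun a k => φ a k) with hΦm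
    have h1 : Φm * Φmᴴ = 1 := by
      ext a b
      simp only [Matrix.mul_apply, Matrix.conjTranspose_apply, Matrix.one_apply, hΦm,
        Matrix.of_apply]
      rw [show (∑ k, φ a k * star (φ b k)) = ∑ k, star (φ b k) * φ a k from
        Finset.sum_congr rfl fun k _ => mul_comm _ _, hortho b a]
      simp [eq_comm]
    have h2 : Φmᴴ * Φm = 1 := mul_eq_one_comm.mp h1
    intro k m
    have h3 := congrFun (congrFun h2 k) m
    simpa only [Matrix.mul_apply, Matrix.conjTranspose_apply, Matrix.one_apply, hΦm,
      Matrix.of_apply] using h3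
  -- sum of outer products is the reduced state
  have hsum : ∑ a, Matrix.vecMulVec (ξ a) (star (ξ a)) = ptraceA ρSA := by
    ext i j
    simp only [Matrix.sum_apply, Matrix.vecMulVec_apply, Pi.star_apply, ptraceA,
      Matrix.of_apply, hρSA]
    have e1 : ∀ a, ξ a i * star (ξ a j) =
        ∑ k, ∑ m, (Ψ (i,k) * star (Ψ (j,m))) * (star (φ a k) * φ a m) := by
      intro a
      simp only [hξ, star_sum, star_mul', star_star, Finset.sum_mul, Finset.mul_sum]
      exact Finset.sum_comm.trans
        (Finset.sum_congr rfl fun x _ => Finset.sum_congr rfl fun y _ => by ring)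
    calc ∑ a, ξ a i * star (ξ a j)
        = ∑ a, ∑ k, ∑ m, (Ψ (i,k) * star (Ψ (j,m))) * (star (φ a k) * φ a m) :=
          Finset.sum_congr rfl fun a _ => e1 a
      _ = ∑ k, ∑ a, ∑ m, (Ψ (i,k) * star (Ψ (j,m))) * (star (φ a k) * φ a m) :=
          Finset.sum_comm
      _ = ∑ k, ∑ m, ∑ a, (Ψ (i,k) * star (Ψ (j,m))) * (star (φ a k) * φ a m) :=
          Finset.sum_congr rfl fun k _ => Finset.sum_comm
      _ = ∑ k, ∑ m, (Ψ (i,k) * star (Ψ (j,m))) * (if k = m then (1:ℂ) else 0) :=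
          Finset.sum_congr rfl fun k _ => Finset.sum_congr rfl fun m _ => by
            rw [← Finset.mul_sum, hcompl]
      _ = ∑ k, Ψ (i,k) * star (Ψ (j,k)) := by simp
  -- per-term computation
  have hterm : ∀ a, outProb ρSA (Matrix.vecMulVec (φ a) (star (φ a))) *
      ergotropy H (condState ρSA (Matrix.vecMulVec (φ a) (star (φ a)))) =
      (Matrix.trace (H * Matrix.vecMulVec (ξ a) (star (ξ a)))).re := by
    intro a
    set p : ℝ := ∑ i, Complex.normSq (ξ a i) with hp
    by_cases hpa : p = 0
    · have hξ0 : ξ a = 0 := by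
        funext i
        have h0 : ∀ x ∈ Finset.univ, (0:ℝ) ≤ Complex.normSq (ξ a x) :=
          fun x _ => Complex.normSq_nonneg _
        have := (Finset.sum_eq_zero_iff_of_nonneg h0).mp (hp ▸ hpa) i (Finset.mem_univ i)
        exact Complex.normSq_eq_zero.mp this
      rw [hP, ← hp, hpa, hξ0]
      rw [trace_mul_vecMulVec]
      simp
    · have hpnn : (0:ℝ) ≤ p := Finset.sum_nonneg fun x _ => Complex.normSq_nonneg _
      have hppos : 0 < p := lt_of_le_of_ne hpnn (Ne.symm hpa)
      set r : ℝ := (Real.sqrt p)⁻¹ with hr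
      have hr2 : r ^ 2 = p⁻¹ := by
        rw [hr, ← Real.sqrt_inv]
        exact Real.sq_sqrt (inv_nonneg.mpr hpnn)
      set u : Fin dS → ℂ := fun i => (r:ℂ) * ξ a i with hu
      have hu1 : ∑ i, Complex.normSq (u i) = 1 := by
        have : ∀ i, Complex.normSq (u i) = r ^ 2 * Complex.normSq (ξ a i) := by
          intro i
          simp [hu, Complex.normSq_mul, Complex.normSq_ofReal, sq]
        rw [Finset.sum_congr rfl fun i _ => this i, ← Finset.mul_sum, ← hp, hr2]
        field_simp
      have hcs : condState ρSA (Matrix.vecMulVec (φ a) (star (φ a))) =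
          Matrix.vecMulVec u (star u) := by
        rw [condState, hA a, hP a, ← hp]
        ext i j
        simp only [Matrix.smul_apply, Matrix.vecMulVec_apply, Pi.star_apply, hu, star_mul',
          Complex.star_def, Complex.conj_ofReal]
        rw [Complex.real_smul]
        push_cast [← hr2]
        ring
      rw [hP, ← hp, hcs, ergotropy, passiveEnergy_pure_eq_zero H hH v hv hker u hu1, sub_zero,
        energy, trace_mul_vecMulVec, trace_mul_vecMulVec]
      have hdot : star u ⬝ᵥ H.mulVec u = ((p⁻¹:ℝ):ℂ) * (star (ξ a) ⬝ᵥ H.mulVec (ξ a)) := by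
        have hu' : u = (r:ℂ) • ξ a := by funext i; simp [hu]
        rw [hu', star_smul, Matrix.mulVec_smul, smul_dotProduct,
          dotProduct_smul]
        rw [show star ((r:ℂ)) = (r:ℂ) from by simp [Complex.star_def, Complex.conj_ofReal]]
        rw [smul_smul, smul_eq_mul]
        push_cast [← hr2]
        ring
      rw [hdot]
      rw [show (((p⁻¹:ℝ):ℂ) * (star (ξ a) ⬝ᵥ H.mulVec (ξ a))).re
          = p⁻¹ * (star (ξ a) ⬝ᵥ H.mulVec (ξ a)).re from by
        simp [Complex.mul_re]]
      field_simp
  rw [Finset.sum_congr rfl fun a _ => hterm a]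
  rw [show (∑ a, (Matrix.trace (H * Matrix.vecMulVec (ξ a) (star (ξ a)))).re)
      = (Matrix.trace (H * ∑ a, Matrix.vecMulVec (ξ a) (star (ξ a)))).re from by
    rw [Matrix.mul_sum, Matrix.trace_sum, Complex.re_sum]]
  rw [hsum]
  rfl
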